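/- arXiv:1803.10920 — 2 statements merged into one kernel-verified Lean document; each statement's English description precedes it below -/
import Mathlib

section
/- Let G(t) ∈ ℤ⟦t⟧ be the power series whose coefficient of t^n is the number of lists of n integers, each belonging to {−2, −1, 0, 1, 2}, whose total sum is 0. Then (5t + 4)(5t − 1)²(t − 1)²G⁴ + 2(t − 1)(5t − 2)(5t − 1)G² + t = 0 in ℤ⟦t⟧. -/
open PowerSeries

/-- The generating function for bridges with step set `{-2, -1, 0, 1, 2}`: the
coefficient of `t^n` is the number of lists of `n` integers from that set with
total sum `0`. -/
noncomputable def bridgeGF : PowerSeries ℤ :=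
  PowerSeries.mk fun n =>
    (Nat.card {l : List ℤ //
      l.length = n ∧
      (∀ x ∈ l, x ∈ ({-2, -1, 0, 1, 2} : Set ℤ)) ∧
      l.sum = 0} : ℤ)

namespace BridgeProof

/-! ### Part 1 : counting lists -/

/-- the five steps -/
def steps (j : Fin 5) : ℤ := (j : ℤ) - 2

def cnt (n : ℕ) (k : ℤ) : ℕ :=
  Fintype.card {g : Fin n → Fin 5 // (∑ i, steps (g i)) = k}

lemma steps_mem (j : Fin 5) : steps j ∈ ({-2, -1, 0, 1, 2} : Set ℤ) := by
  fin_cases j <;> simp [steps]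

/-- decode -/
def dec (x : ℤ) : Fin 5 := if x = -2 then 0 else if x = -1 then 1 else if x = 0 then 2
  else if x = 1 then 3 else 4

lemma steps_dec {x : ℤ} (hx : x ∈ ({-2, -1, 0, 1, 2} : Set ℤ)) : steps (dec x) = x := by
  simp only [Set.mem_insert_iff, Set.mem_singleton_iff] at hx
  rcases hx with h|h|h|h|h <;> subst h <;> decide

lemma dec_steps (j : Fin 5) : dec (steps j) = j := by fin_cases j <;> decide

/-- lists with given length / steps / sum ≃ tuples -/
def listEquiv (n : ℕ) (k : ℤ) :
    {l : List ℤ // l.length = n ∧ (∀ x ∈ l, x ∈ ({-2, -1, 0, 1, 2} : Set ℤ)) ∧ l.sum = k} ≃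
      {g : Fin n → Fin 5 // (∑ i, steps (g i)) = k} where
  toFun := fun ⟨l, h1, h2, h3⟩ => ⟨fun i => dec (l.get (Fin.cast h1.symm i)), by
    have : ∀ i : Fin n, steps (dec (l.get (Fin.cast h1.symm i))) = l.get (Fin.cast h1.symm i) := by
      intro i; exact steps_dec (h2 _ (l.get_mem _))
    rw [Finset.sum_congr rfl (fun i _ => this i)]
    rw [← h3]
    subst h1
    simp only [Fin.cast_refl, Function.comp_id, id_eq]
    conv_rhs => rw [← List.ofFn_get l]
    rw [List.sum_ofFn]⟩
  invFun := fun ⟨g, hg⟩ => ⟨List.ofFn (fun i => steps (g i)), by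
    constructor
    · simp
    constructor
    · intro x hx
      rw [List.mem_ofFn] at hx
      obtain ⟨i, rfl⟩ := hx
      exact steps_mem _
    · rw [List.sum_ofFn, hg]⟩
  left_inv := by
    rintro ⟨l, h1, h2, h3⟩
    apply Subtype.ext
    simp only
    subst h1
    conv_rhs => rw [← List.ofFn_get l]
    congr 1
    funext i
    simp only [Fin.cast_refl]
    exact steps_dec (h2 _ (l.get_mem _))
  right_inv := by
    rintro ⟨g, hg⟩
    apply Subtype.ext
    funext i
    simp only [List.get_ofFn]
    rw [dec_steps]
    simp

lemma card_lists (n : ℕ) (k : ℤ) :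
    Nat.card {l : List ℤ // l.length = n ∧ (∀ x ∈ l, x ∈ ({-2, -1, 0, 1, 2} : Set ℤ)) ∧
      l.sum = k} = cnt n k := by
  rw [Nat.card_congr (listEquiv n k), cnt, Nat.card_eq_fintype_card]

lemma cnt_zero (k : ℤ) : cnt 0 k = if k = 0 then 1 else 0 := by
  rw [cnt]
  split_ifs with h
  · subst h
    rw [Fintype.card_eq_one_iff]
    refine ⟨⟨finZeroElim, by simp⟩, ?_⟩
    rintro ⟨g, hg⟩
    apply Subtype.ext
    funext i
    exact absurd i.2 (by omega)
  · rw [Fintype.card_eq_zero_iff]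
    exact ⟨fun ⟨g, hg⟩ => h (by simpa using hg.symm)⟩

def succEquiv (n : ℕ) (k : ℤ) :
    {g : Fin (n+1) → Fin 5 // (∑ i, steps (g i)) = k} ≃
      Σ j : Fin 5, {g : Fin n → Fin 5 // (∑ i, steps (g i)) = k - steps j} where
  toFun := fun ⟨g, hg⟩ => ⟨g 0, fun i => g i.succ, by
    rw [Fin.sum_univ_succ] at hg; linarith⟩
  invFun := fun ⟨j, g, hg⟩ => ⟨Fin.cons j g, by
    rw [Fin.sum_univ_succ]
    simp only [Fin.cons_zero, Fin.cons_succ]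
    omega⟩
  left_inv := by
    rintro ⟨g, hg⟩
    apply Subtype.ext
    exact Fin.cons_self_tail g
  right_inv := by
    rintro ⟨j, g, hg⟩
    refine Sigma.ext rfl ?_
    simp only [Fin.cons_zero, heq_eq_eq]
    apply heq_of_eq; apply Subtype.ext
    funext i
    simp [Fin.cons_succ]

lemma cnt_succ (n : ℕ) (k : ℤ) : cnt (n+1) k = ∑ j : Fin 5, cnt n (k - steps j) := by
  rw [cnt, Fintype.card_congr (succEquiv n k), Fintype.card_sigma]
  rfl

lemma cnt_eq_zero_of_lt {n : ℕ} {k : ℤ} (h : k < -2 * n) : cnt n k = 0 := by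
  rw [cnt, Fintype.card_eq_zero_iff]
  refine ⟨fun ⟨g, hg⟩ => absurd hg (fun hg' => ?_)⟩
  have : (-2 : ℤ) * n ≤ ∑ i, steps (g i) := by
    calc (-2 : ℤ) * n = ∑ _i : Fin n, (-2 : ℤ) := by simp [mul_comm]
    _ ≤ _ := Finset.sum_le_sum (fun i _ => by
        have := (g i).2; simp only [steps]; omega)
  omega

/-! ### Part 2 : the counting sequence as coefficients of `(1+Y+Y²+Y³+Y⁴)^n` -/

local notation "Y" => Polynomial.X

noncomputable def p : Polynomial ℚ := 1 + Y + Y^2 + Y^3 + Y^4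

lemma hpoly (n : ℕ) (m : ℕ) : (cnt n ((m : ℤ) - 2*n) : ℚ) = (p^n).coeff m := by
  induction n generalizing m with
  | zero =>
      simp only [pow_zero, Polynomial.coeff_one, cnt_zero, Nat.cast_zero, mul_zero, sub_zero]
      split_ifs with h1 h2 h2 <;> simp_all <;> omega
  | succ n ih =>
      rw [pow_succ, cnt_succ]
      have hmul : (p^n * p).coeff m =
          ∑ j : Fin 5, if (j:ℕ) ≤ m then (p^n).coeff (m - (j:ℕ)) else 0 := by
        have hp : p = ∑ j : Fin 5, Y ^ (j:ℕ) := by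
          rw [p, Fin.sum_univ_five]
          norm_num [show ((3:Fin 5):ℕ) = 3 from rfl, show ((4:Fin 5):ℕ) = 4 from rfl]
        rw [hp, Finset.mul_sum]
        rw [Polynomial.finset_sum_coeff]
        exact Finset.sum_congr rfl (fun j _ => Polynomial.coeff_mul_X_pow' _ _ _)
      rw [hmul, Nat.cast_sum]
      refine Finset.sum_congr rfl (fun j _ => ?_)
      simp only [steps]
      split_ifs with h
      · rw [← ih (m - (j:ℕ))]
        congr 2
        have : ((m - (j:ℕ) : ℕ) : ℤ) = (m:ℤ) - (j:ℕ) := by omega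
        rw [this]
        push_cast
        ring
      · rw [Nat.cast_eq_zero]
        apply cnt_eq_zero_of_lt
        have : (j:ℕ) < 5 := j.2
        push_cast
        omega

/-- the central coefficients -/
def c (n : ℕ) : ℕ := cnt n 0

lemma c_eq (n : ℕ) : (c n : ℚ) = (p^n).coeff (2*n) := by
  have := hpoly n (2*n)
  rw [c]
  convert this using 3
  push_cast
  ring

lemma c0 : c 0 = 1 := by simp [c, cnt_zero]
lemma c1 : c 1 = 1 := by
  simp [c, cnt_succ, cnt_zero, Fin.sum_univ_five, steps]; decide
lemma c2 : c 2 = 5 := by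
  simp [c, cnt_succ, cnt_zero, Fin.sum_univ_five, steps]; decide
lemma c3 : c 3 = 19 := by
  simp [c, cnt_succ, cnt_zero, Fin.sum_univ_five, steps]; decide

/-! ### Part 3 : the telescoping certificate and the recurrence -/

noncomputable def T (k : ℕ) : Polynomial ℚ :=
  -Polynomial.C (2*(k:ℚ)+7) - Polynomial.C (7*(k:ℚ)+25) * Y - Polynomial.C (17*(k:ℚ)+38) * Y^2
  - Polynomial.C (34*(k:ℚ)+70) * Y^3
  - Polynomial.C (9*(k:ℚ)+20) * Y^4 - Polynomial.C (15*(k:ℚ)+31) * Y^5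
  + Polynomial.C (15*(k:ℚ)+31) * Y^7 + Polynomial.C (9*(k:ℚ)+20) * Y^8
  + Polynomial.C (34*(k:ℚ)+70) * Y^9
  + Polynomial.C (17*(k:ℚ)+38) * Y^10 + Polynomial.C (7*(k:ℚ)+25) * Y^11
  + Polynomial.C (2*(k:ℚ)+7) * Y^12

lemma hdT (k : ℕ) : Polynomial.derivative (T k) =
  -Polynomial.C (7*(k:ℚ)+25) - Polynomial.C (2*(17*(k:ℚ)+38)) * Y
  - Polynomial.C (3*(34*(k:ℚ)+70)) * Y^2
  - Polynomial.C (4*(9*(k:ℚ)+20)) * Y^3 - Polynomial.C (5*(15*(k:ℚ)+31)) * Y^4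
  + Polynomial.C (7*(15*(k:ℚ)+31)) * Y^6 + Polynomial.C (8*(9*(k:ℚ)+20)) * Y^7
  + Polynomial.C (9*(34*(k:ℚ)+70)) * Y^8
  + Polynomial.C (10*(17*(k:ℚ)+38)) * Y^9 + Polynomial.C (11*(7*(k:ℚ)+25)) * Y^10
  + Polynomial.C (12*(2*(k:ℚ)+7)) * Y^11 := by
  simp only [T, Polynomial.derivative_add, Polynomial.derivative_sub, Polynomial.derivative_neg,
    Polynomial.derivative_C, Polynomial.derivative_C_mul, Polynomial.derivative_X,
    Polynomial.derivative_X_pow, map_mul, map_ofNat, map_natCast]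
  push_cast
  ring

lemma hdp : Polynomial.derivative p = 1 + Polynomial.C 2 * Y + Polynomial.C 3 * Y^2
    + Polynomial.C 4 * Y^3 := by
  simp only [p, Polynomial.derivative_add, Polynomial.derivative_one, Polynomial.derivative_X,
    Polynomial.derivative_X_pow]
  push_cast
  ring

noncomputable def q0 (κ : ℚ) : ℚ := 125*κ^2+375*κ+250
noncomputable def q1 (κ : ℚ) : ℚ := -25*κ^2-25*κ+50
noncomputable def q2 (κ : ℚ) : ℚ := -105*κ^2-445*κ-480
noncomputable def q3 (κ : ℚ) : ℚ := κ^2-43*κ-140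
noncomputable def q4 (κ : ℚ) : ℚ := 4*κ^2+30*κ+56

lemma hkey (k : ℕ) :
    Polynomial.C (q0 (k:ℚ)) * (Y^8 * p^k) + Polynomial.C (q1 (k:ℚ)) * (Y^6 * p^(k+1))
      + Polynomial.C (q2 (k:ℚ)) * (Y^4 * p^(k+2)) + Polynomial.C (q3 (k:ℚ)) * (Y^2 * p^(k+3))
      + Polynomial.C (q4 (k:ℚ)) * (Y^0 * p^(k+4))
    = Y * Polynomial.derivative (T k * p^(k+1))
      - Polynomial.C (2*(k:ℚ)+8) * (T k * p^(k+1)) := by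
  rw [Polynomial.derivative_mul, Polynomial.derivative_pow, hdT, hdp]
  have hnk : ((k+1 : ℕ) : ℚ) = (k:ℚ)+1 := by push_cast; ring
  rw [hnk]
  have hpk : p^(k+1) = p^k * p := by ring
  have hpk2 : p^(k+2) = p^k * p * p := by ring
  have hpk3 : p^(k+3) = p^k * p * p * p := by ring
  have hpk4 : p^(k+4) = p^k * p * p * p * p := by ring
  have hpk1 : p^(k+1-1) = p^k := by norm_num
  rw [hpk1, hpk, hpk2, hpk3, hpk4]
  simp only [q0, q1, q2, q3, q4, T, p, map_add, map_mul, map_sub, map_neg, map_pow, map_ofNat,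
    map_one, Polynomial.C_eq_natCast]
  push_cast
  ring

lemma hrec (k : ℕ) :
    q0 (k:ℚ) * (c k : ℚ) + q1 (k:ℚ) * (c (k+1) : ℚ) + q2 (k:ℚ) * (c (k+2) : ℚ)
      + q3 (k:ℚ) * (c (k+3) : ℚ) + q4 (k:ℚ) * (c (k+4) : ℚ) = 0 := by
  have key := congrArg (fun f => f.coeff (2*k+8)) (hkey k)
  simp only [Polynomial.coeff_add, Polynomial.coeff_sub, Polynomial.coeff_C_mul] at key
  have e0 : (Y^8 * p^k).coeff (2*k+8) = (p^k).coeff (2*k) := by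
    rw [show 2*k+8 = 2*k + 8 from rfl, Polynomial.coeff_X_pow_mul]
  have e1 : (Y^6 * p^(k+1)).coeff (2*k+8) = (p^(k+1)).coeff (2*(k+1)) := by
    rw [show 2*k+8 = 2*(k+1) + 6 by ring, Polynomial.coeff_X_pow_mul]
  have e2 : (Y^4 * p^(k+2)).coeff (2*k+8) = (p^(k+2)).coeff (2*(k+2)) := by
    rw [show 2*k+8 = 2*(k+2) + 4 by ring, Polynomial.coeff_X_pow_mul]
  have e3 : (Y^2 * p^(k+3)).coeff (2*k+8) = (p^(k+3)).coeff (2*(k+3)) := by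
    rw [show 2*k+8 = 2*(k+3) + 2 by ring, Polynomial.coeff_X_pow_mul]
  have e4 : (Y^0 * p^(k+4)).coeff (2*k+8) = (p^(k+4)).coeff (2*(k+4)) := by
    rw [show 2*k+8 = 2*(k+4) + 0 by ring, Polynomial.coeff_X_pow_mul]
  rw [e0, e1, e2, e3, e4] at key
  have hr : (Y * Polynomial.derivative (T k * p^(k+1))).coeff (2*k+8)
      - (2*(k:ℚ)+8) * (T k * p^(k+1)).coeff (2*k+8) = 0 := by
    rw [show 2*k+8 = (2*k+7) + 1 by ring, Polynomial.coeff_X_mul, Polynomial.coeff_derivative]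
    push_cast
    ring
  rw [c_eq, c_eq, c_eq, c_eq, c_eq]
  rw [key]
  convert hr using 2 <;> push_cast <;> ring

/-! ### Part 4 : the power series `Gq` and its second order ODE -/

noncomputable def Gq : ℚ⟦X⟧ := PowerSeries.mk fun n => (c n : ℚ)

local notation "D" => derivative ℚ

lemma cXj (j n : ℕ) (hj : j ≤ n) (f : ℚ⟦X⟧) :
    (coeff n) ((X:ℚ⟦X⟧)^j * f) = coeff (n-j) f := by
  rw [coeff_X_pow_mul']
  exact if_pos hj

lemma hODEc :
    (C 4 * (X^1 * D (D Gq)) + C 1 * (X^2 * D (D Gq)) - C 105 * (X^3 * D (D Gq))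
      - C 25 * (X^4 * D (D Gq)) + C 125 * (X^5 * D (D Gq)))
    + (C 2 * D Gq - C 48 * (X^1 * D Gq) - C 130 * (X^2 * D Gq) + C 500 * (X^4 * D Gq))
    + (- C 2 * Gq - C 10 * (X^1 * Gq) + C 50 * (X^2 * Gq) + C 250 * (X^3 * Gq)) = 0 := by
  ext n
  simp only [map_add, map_sub, map_neg, coeff_C_mul, map_zero, neg_mul]
  rcases n with _|_|_|_|_|k
  · simp only [coeff_X_pow_mul', coeff_derivative, Gq, coeff_mk]
    norm_num [c0, c1]
  · simp only [coeff_X_pow_mul', coeff_derivative, Gq, coeff_mk]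
    norm_num [c0, c1, c2]
  · simp only [coeff_X_pow_mul', coeff_derivative, Gq, coeff_mk]
    norm_num [c0, c1, c2, c3]
  · -- n = 3 : use hrec 0
    have hr := hrec 0
    simp only [q0, q1, q2, q3, q4, Nat.cast_zero] at hr
    norm_num [c0, c1, c2, c3] at hr
    simp only [coeff_X_pow_mul', coeff_derivative, Gq, coeff_mk]
    norm_num [c0, c1, c2, c3]
    linarith
  · -- n = 4 : use hrec 1
    have hr := hrec 1
    simp only [q0, q1, q2, q3, q4, Nat.cast_one] at hr
    norm_num [c1, c2, c3] at hr
    simp only [coeff_X_pow_mul', coeff_derivative, Gq, coeff_mk]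
    norm_num [c1, c2, c3]
    linarith
  · -- n = k+5 : use hrec (k+2)
    have hr := hrec (k+2)
    simp only [q0, q1, q2, q3, q4] at hr
    simp only [show k+1+1+1+1+1 = k+5 from rfl]
    rw [cXj 1 (k+5) (by omega), cXj 2 (k+5) (by omega), cXj 3 (k+5) (by omega),
      cXj 4 (k+5) (by omega), cXj 5 (k+5) (by omega),
      cXj 1 (k+5) (by omega), cXj 2 (k+5) (by omega), cXj 4 (k+5) (by omega),
      cXj 1 (k+5) (by omega), cXj 2 (k+5) (by omega), cXj 3 (k+5) (by omega)]
    simp only [show k+5-1 = k+4 from rfl, show k+5-2 = k+3 from rfl,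
      show k+5-3 = k+2 from rfl, show k+5-4 = k+1 from rfl, show k+5-5 = k from rfl]
    simp only [coeff_derivative, Gq, coeff_mk]
    push_cast at hr ⊢
    linear_combination hr

/-! ### Part 5 : derivative kit, ODE in ring form, the series E -/

lemma Dmul (f g : ℚ⟦X⟧) : D (f * g) = f * D g + g * D f := by
  have := Derivation.leibniz (derivative ℚ) f g
  simpa [smul_eq_mul] using this

lemma Dnum (n : ℕ) [n.AtLeastTwo] : D (OfNat.ofNat n : ℚ⟦X⟧) = 0 := by
  rw [← map_ofNat (C (R := ℚ)) n, derivative_C]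

lemma DX2 : D ((X:ℚ⟦X⟧)^2) = 2*X := by
  rw [pow_two, Dmul, derivative_X]; ring
lemma DX3 : D ((X:ℚ⟦X⟧)^3) = 3*X^2 := by
  rw [pow_succ, Dmul, derivative_X, DX2]; ring
lemma DX4 : D ((X:ℚ⟦X⟧)^4) = 4*X^3 := by
  rw [pow_succ, Dmul, derivative_X, DX3]; ring
lemma DX5 : D ((X:ℚ⟦X⟧)^5) = 5*X^4 := by
  rw [pow_succ, Dmul, derivative_X, DX4]; ring

lemma hODE :
    (4*X + X^2 - 105*X^3 - 25*X^4 + 125*X^5) * D (D Gq)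
    + (2 - 48*X - 130*X^2 + 500*X^4) * D Gq
    + ((-2:ℚ⟦X⟧) - 10*X + 50*X^2 + 250*X^3) * Gq = 0 := by
  have h := hODEc
  simp only [map_ofNat, map_one, pow_one] at h
  linear_combination h

lemma hDODE :
    (4*X + X^2 - 105*X^3 - 25*X^4 + 125*X^5) * D (D (D Gq))
    + (4 + 2*X - 315*X^2 - 100*X^3 + 625*X^4 + (2 - 48*X - 130*X^2 + 500*X^4)) * D (D Gq)
    + ((-48:ℚ⟦X⟧) - 260*X + 2000*X^3 + ((-2:ℚ⟦X⟧) - 10*X + 50*X^2 + 250*X^3)) * D Gq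
    + ((-10:ℚ⟦X⟧) + 100*X + 750*X^2) * Gq = 0 := by
  have h := congrArg (fun f => D f) hODE
  simp only [map_add, map_zero, Dmul, Dnum _, derivative_X, DX2, DX3, DX4, DX5, map_sub, map_neg,
    Derivation.map_one_eq_zero] at h
  linear_combination h

noncomputable def G1 : ℚ⟦X⟧ := D Gq
noncomputable def G2 : ℚ⟦X⟧ := D G1
noncomputable def G3 : ℚ⟦X⟧ := D G2

noncomputable def Eser : ℚ⟦X⟧ :=
  ((-14:ℚ⟦X⟧) + 34*X + 330*X^2 - 850*X^3 + 500*X^4) * Gq * Gq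
  + (16 - 172*X + 496*X^2 - 40*X^3 - 800*X^4 + 500*X^5) * Gq * G1
  + ((-2:ℚ⟦X⟧) - 10*X)

noncomputable def E1x : ℚ⟦X⟧ :=
  (34 + 660*X - 2550*X^2 + 2000*X^3) * Gq * Gq
  + ((-200:ℚ⟦X⟧) + 1060*X + 540*X^2 - 4900*X^3 + 3500*X^4) * Gq * G1
  + (16 - 172*X + 496*X^2 - 40*X^3 - 800*X^4 + 500*X^5) * (G1 * G1 + Gq * G2)
  + ((-10:ℚ⟦X⟧))

noncomputable def E2x : ℚ⟦X⟧ :=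
  (660 - 5100*X + 6000*X^2) * Gq * Gq
  + (1128 + 2400*X - 19800*X^2 + 18000*X^3) * Gq * G1
  + ((-372:ℚ⟦X⟧) + 2052*X + 420*X^2 - 8100*X^3 + 6000*X^4) * (G1 * G1 + Gq * G2)
  + (48 - 516*X + 1488*X^2 - 120*X^3 - 2400*X^4 + 1500*X^5) * (G1 * G2)
  + (16 - 172*X + 496*X^2 - 40*X^3 - 800*X^4 + 500*X^5) * Gq * G3

lemma hdE : D Eser = E1x := by
  simp only [Eser, E1x, G1, G2, Dmul, Dnum _, derivative_X, DX2, DX3, DX4, DX5,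
    map_add, map_sub, map_neg, Derivation.map_one_eq_zero]
  ring

lemma hdE1 : D E1x = E2x := by
  simp only [E1x, E2x, G1, G2, G3, Dmul, Dnum _, derivative_X, DX2, DX3, DX4, DX5,
    map_add, map_sub, map_neg, Derivation.map_one_eq_zero]
  ring

lemma hEode : (4*X + 45*X^2 + 150*X^3 + 125*X^4) * E2x + (6 + 15*X - 75*X^2) * E1x
    + ((-30:ℚ⟦X⟧) + 75*X) * Eser = 0 := by
  have h1 := hODE
  have h2 := hDODE
  simp only [show D Gq = G1 from rfl, show D G1 = G2 from rfl, show D G2 = G3 from rfl] at h1 h2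
  simp only [Eser, E1x, E2x]
  linear_combination
    ((16 + 4*X - 420*X^2 - 100*X^3 + 500*X^4) * Gq) * h2
    + (((-392:ℚ⟦X⟧) + 220*X + 400*X^2 + 1500*X^3) * Gq
       + (48 + 12*X - 1260*X^2 - 300*X^3 + 1500*X^4) * G1) * h1

/-! ### Part 6 : E vanishes -/

lemma hEodeD : (4*X + 45*X^2 + 150*X^3 + 125*X^4) * D (D Eser) + (6 + 15*X - 75*X^2) * D Eser
    + ((-30:ℚ⟦X⟧) + 75*X) * Eser = 0 := by
  rw [hdE, hdE1]
  exact hEode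

lemma hEodeDC :
    C 4 * (X^1 * D (D Eser)) + C 45 * (X^2 * D (D Eser)) + C 150 * (X^3 * D (D Eser))
    + C 125 * (X^4 * D (D Eser))
    + C 6 * D Eser + C 15 * (X^1 * D Eser) - C 75 * (X^2 * D Eser)
    - C 30 * Eser + C 75 * (X^1 * Eser) = 0 := by
  simp only [map_ofNat, pow_one]
  linear_combination hEodeD

lemma mul0 (f g : ℚ⟦X⟧) : coeff 0 (f * g) = coeff 0 f * coeff 0 g := by
  simp [coeff_mul]

lemma e0 : coeff 0 Eser = 0 := by
  simp only [Eser, map_add, map_sub, mul0, G1, coeff_derivative, Gq, coeff_mk]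
  norm_num [c0, c1, map_ofNat]

lemma Ecoeff (n : ℕ) : coeff n Eser = 0 := by
  induction n using Nat.strong_induction_on with
  | _ n IH =>
    rcases n with _|m
    · exact e0
    · have hx := congrArg (coeff m) hEodeDC
      simp only [map_add, map_sub, coeff_C_mul, map_zero] at hx
      have z0' : (constantCoeff) Eser = 0 := by
        have := e0; rwa [coeff_zero_eq_constantCoeff] at this
      rcases m with _|_|_|_|k
      · simp only [coeff_X_pow_mul', coeff_derivative] at hx
        norm_num at hx
        show coeff 1 Eser = 0
        linarith [hx, z0']
      · simp only [coeff_X_pow_mul', coeff_derivative] at hx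
        norm_num at hx
        show coeff 2 Eser = 0
        linarith [hx, z0', IH 1 (by omega)]
      · simp only [coeff_X_pow_mul', coeff_derivative] at hx
        norm_num at hx
        show coeff 3 Eser = 0
        linarith [hx, z0', IH 1 (by omega), IH 2 (by omega)]
      · simp only [coeff_X_pow_mul', coeff_derivative] at hx
        norm_num at hx
        show coeff 4 Eser = 0
        linarith [hx, z0', IH 1 (by omega), IH 2 (by omega), IH 3 (by omega)]
      · rw [cXj 1 (k+4) (by omega), cXj 2 (k+4) (by omega), cXj 3 (k+4) (by omega),
          cXj 4 (k+4) (by omega), cXj 1 (k+4) (by omega), cXj 2 (k+4) (by omega),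
          cXj 1 (k+4) (by omega)] at hx
        simp only [show k+4-1 = k+3 from rfl, show k+4-2 = k+2 from rfl,
          show k+4-3 = k+1 from rfl, show k+4-4 = k from rfl, coeff_derivative] at hx
        have z2 : coeff (k+2) Eser = 0 := IH (k+2) (by omega)
        have z3 : coeff (k+3) Eser = 0 := IH (k+3) (by omega)
        have z4 : coeff (k+4) Eser = 0 := IH (k+4) (by omega)
        rw [z2, z3, z4] at hx
        push_cast at hx
        have h2 : ((4*((k:ℚ)+4)+6) * ((k:ℚ)+5)) * coeff (k+5) Eser = 0 := by
          rw [show k+4+1 = k+5 from rfl] at hx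
          linear_combination hx
        have hK : ((4*((k:ℚ)+4)+6) * ((k:ℚ)+5)) ≠ 0 := by positivity
        exact (mul_eq_zero.mp h2).resolve_left hK

lemma Ezero : Eser = 0 := by
  ext n
  rw [Ecoeff, map_zero]

/-! ### Part 7 : the series W and U, and the final identity over ℚ -/

noncomputable def Wser : ℚ⟦X⟧ :=
  (4 - 19*X - 10*X^2 + 25*X^3) * Gq * Gq + ((-2:ℚ⟦X⟧) + 5*X)
noncomputable def W1x : ℚ⟦X⟧ :=
  ((-19:ℚ⟦X⟧) - 20*X + 75*X^2) * Gq * Gq + 2*(4 - 19*X - 10*X^2 + 25*X^3) * Gq * G1 + 5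
noncomputable def User : ℚ⟦X⟧ := Wser * Wser - 4*(1 - 6*X + 5*X^2)

lemma hdW : D Wser = W1x := by
  simp only [Wser, W1x, G1, Dmul, Dnum _, derivative_X, DX2, DX3,
    map_add, map_sub, map_neg, Derivation.map_one_eq_zero]
  ring

lemma hdU : D User = 2*Wser*W1x + (24 - 40*X) := by
  simp only [User, Dmul, Dnum _, derivative_X, DX2, hdW,
    map_add, map_sub, map_neg, Derivation.map_one_eq_zero]
  ring

lemma hUodeD : (1 - 6*X + 5*X^2) * D User + (6 - 10*X) * User = 0 := by
  rw [hdU]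
  have hE : ((-14:ℚ⟦X⟧) + 34*X + 330*X^2 - 850*X^3 + 500*X^4) * Gq * Gq
      + (16 - 172*X + 496*X^2 - 40*X^3 - 800*X^4 + 500*X^5) * Gq * G1
      + ((-2:ℚ⟦X⟧) - 10*X) = 0 := Ezero
  simp only [User, W1x, Wser]
  linear_combination ((4 - 19*X - 10*X^2 + 25*X^3) * Gq * Gq + ((-2:ℚ⟦X⟧) + 5*X)) * hE

lemma hUodeC : C 1 * D User - C 6 * (X^1 * D User) + C 5 * (X^2 * D User)
    + C 6 * User - C 10 * (X^1 * User) = 0 := by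
  simp only [map_ofNat, map_one, pow_one]
  linear_combination hUodeD

lemma u0 : coeff 0 User = 0 := by
  simp only [User, Wser, map_add, map_sub, mul0, Gq, coeff_mk]
  norm_num [c0, map_ofNat]

lemma Ucoeff (n : ℕ) : coeff n User = 0 := by
  induction n using Nat.strong_induction_on with
  | _ n IH =>
    rcases n with _|m
    · exact u0
    · have hx := congrArg (coeff m) hUodeC
      simp only [map_add, map_sub, coeff_C_mul, map_zero] at hx
      have z0' : (constantCoeff) User = 0 := by
        have := u0; rwa [coeff_zero_eq_constantCoeff] at this
      rcases m with _|_|k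
      · simp only [coeff_X_pow_mul', coeff_derivative] at hx
        norm_num at hx
        show coeff 1 User = 0
        linarith [hx, z0']
      · simp only [coeff_X_pow_mul', coeff_derivative] at hx
        norm_num at hx
        show coeff 2 User = 0
        linarith [hx, z0', IH 1 (by omega)]
      · rw [cXj 1 (k+2) (by omega), cXj 2 (k+2) (by omega), cXj 1 (k+2) (by omega)] at hx
        simp only [show k+2-1 = k+1 from rfl, show k+2-2 = k from rfl, coeff_derivative] at hx
        have z1 : coeff (k+1) User = 0 := IH (k+1) (by omega)
        have z2 : coeff (k+2) User = 0 := IH (k+2) (by omega)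
        rw [z1, z2] at hx
        push_cast at hx
        have h2 : ((k:ℚ)+3) * coeff (k+3) User = 0 := by
          rw [show k+2+1 = k+3 from rfl] at hx
          linear_combination hx
        have hK : ((k:ℚ)+3) ≠ 0 := by positivity
        exact (mul_eq_zero.mp h2).resolve_left hK

lemma Uzero : User = 0 := by
  ext n; rw [Ucoeff, map_zero]

lemma thmQ : (5 * X + 4) * (5 * X - 1) ^ 2 * (X - 1) ^ 2 * Gq ^ 4
    + 2 * (X - 1) * (5 * X - 2) * (5 * X - 1) * Gq ^ 2 + X = 0 := by
  have hW : Wser * Wser - 4*(1 - 6*X + 5*X^2) = 0 := Uzero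
  have h5 : (5 * X + 4 : ℚ⟦X⟧) ≠ 0 := by
    intro h
    have := congrArg (constantCoeff) h
    simp [map_ofNat] at this
  have key : (5 * X + 4) * ((5 * X + 4) * (5 * X - 1) ^ 2 * (X - 1) ^ 2 * Gq ^ 4
      + 2 * (X - 1) * (5 * X - 2) * (5 * X - 1) * Gq ^ 2 + X) = 0 := by
    simp only [Wser] at hW
    linear_combination hW
  rcases mul_eq_zero.mp key with h|h
  · exact absurd h h5
  · exact h

/-! ### Part 8 : transfer to ℤ -/

lemma hmapG : PowerSeries.map (Int.castRingHom ℚ) bridgeGF = Gq := by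
  ext n
  rw [PowerSeries.coeff_map]
  simp only [bridgeGF, coeff_mk, Gq]
  rw [card_lists n 0]
  push_cast
  rfl

end BridgeProof

theorem bridge_minimalPolynomial :
    (5 * X + 4) * (5 * X - 1) ^ 2 * (X - 1) ^ 2 * bridgeGF ^ 4
      + 2 * (X - 1) * (5 * X - 2) * (5 * X - 1) * bridgeGF ^ 2 + X = 0 := by
  have hmap : PowerSeries.map (Int.castRingHom ℚ)
      ((5 * X + 4) * (5 * X - 1) ^ 2 * (X - 1) ^ 2 * bridgeGF ^ 4
        + 2 * (X - 1) * (5 * X - 2) * (5 * X - 1) * bridgeGF ^ 2 + X) = 0 := by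
    simp only [map_add, map_mul, map_pow, map_sub, map_ofNat, PowerSeries.map_X, map_one,
      BridgeProof.hmapG]
    have := BridgeProof.thmQ
    linear_combination this
  ext n
  have := congrArg (PowerSeries.coeff n) hmap
  rw [PowerSeries.coeff_map, map_zero] at this
  rw [map_zero]
  rw [show ((Int.castRingHom ℚ) : ℤ → ℚ) = Int.cast from rfl] at this
  exact_mod_cast this
end

section
/- Let F(t) ∈ ℤ⟦t⟧ be the power series whose coefficient of t^n is the number of lists of n integers, each belonging to {−1, 0, 2}, all of whose prefix sums are ≥ 0 and whose total sum is 0. Then 1 + (t − 1)F + t³F³ = 0 in ℤ⟦t⟧. -/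
open PowerSeries

/-- The generating function for nonnegative excursions with step set
`{-1, 0, 2}`: the coefficient of `t^n` is the number of lists of `n` integers
from that set, all of whose prefix sums are `≥ 0`, with total sum `0`. -/
noncomputable def excursionGF : PowerSeries ℤ :=
  PowerSeries.mk fun n =>
    (Nat.card {l : List ℤ //
      l.length = n ∧
      (∀ x ∈ l, x ∈ ({-1, 0, 2} : Set ℤ)) ∧
      (∀ i : ℕ, 0 ≤ (l.take i).sum) ∧
      l.sum = 0} : ℤ)

namespace ExcursionAux


def Exc (l : List ℤ) : Prop :=
  (∀ x ∈ l, x ∈ ({-1, 0, 2} : Set ℤ)) ∧ (∀ i : ℕ, 0 ≤ (l.take i).sum) ∧ l.sum = 0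


lemma exc_nil : Exc [] := by
  refine ⟨by simp, fun i => by simp, by simp⟩

lemma exc_cons_zero {l : List ℤ} : Exc (0 :: l) ↔ Exc l := by
  constructor
  · rintro ⟨hm, hp, hs⟩
    refine ⟨fun x hx => hm x (by simp [hx]), fun i => ?_, by simpa using hs⟩
    have := hp (i + 1)
    simpa using this
  · rintro ⟨hm, hp, hs⟩
    refine ⟨?_, fun i => ?_, by simpa using hs⟩
    · intro x hx
      rcases List.mem_cons.1 hx with h | h
      · simp [h]
      · exact hm x h
    · cases i with
      | zero => simp
      | succ j => simpa using hp j

lemma head_zero_or_two {x : ℤ} {r : List ℤ} (h : Exc (x :: r)) : x = 0 ∨ x = 2 := by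
  have hx := h.1 x (by simp)
  have h1 := h.2.1 1
  simp at h1
  rcases hx with h | h | h
  · omega
  · left; exact h
  · right; exact h

def cut : ℤ → List ℤ → Option (List ℤ × List ℤ)
  | _, [] => none
  | h, x :: xs => if h + x < 0 then some ([], xs) else (cut (h + x) xs).map fun p => (x :: p.1, p.2)

lemma cut_isSome : ∀ (l : List ℤ) (h : ℤ), 0 ≤ h → h + l.sum < 0 → (cut h l).isSome
  | [], h, h0, hs => by simp at hs; omega
  | x :: xs, h, h0, hs => by
    rw [cut]
    split
    · simp
    · rename_i hc
      have : (cut (h + x) xs).isSome :=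
        cut_isSome xs (h + x) (by omega) (by simp at hs; omega)
      simpa [Option.isSome_map] using this

lemma cut_spec : ∀ (l : List ℤ) (h : ℤ) (a r : List ℤ),
    (∀ x ∈ l, x ∈ ({-1, 0, 2} : Set ℤ)) → 0 ≤ h → cut h l = some (a, r) →
    l = a ++ -1 :: r ∧ (∀ i : ℕ, 0 ≤ h + (a.take i).sum) ∧ h + a.sum = 0
  | [], h, a, r, hm, h0, hc => by simp [cut] at hc
  | x :: xs, h, a, r, hm, h0, hc => by
    rw [cut] at hc
    split at hc
    · rename_i hlt
      have hx : x = -1 ∧ h = 0 := by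
        have := hm x (by simp)
        simp at this
        rcases this with h' | h' | h' <;> omega
      simp at hc
      obtain ⟨rfl, rfl⟩ := hc
      refine ⟨by simp [hx.1], fun i => by simpa using h0, by simpa using hx.2⟩
    · rename_i hge
      simp only [Option.map_eq_some_iff] at hc
      obtain ⟨⟨p1, p2⟩, hp, heq⟩ := hc
      have ih := cut_spec xs (h + x) p1 p2 (fun y hy => hm y (by simp [hy])) (by omega) hp
      simp at heq
      obtain ⟨rfl, rfl⟩ := heq
      refine ⟨by simp [ih.1], fun i => ?_, by have := ih.2.2; simp; omega⟩
      cases i with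
      | zero => simpa using h0
      | succ j => have := ih.2.1 j; simp; omega

lemma cut_of : ∀ (a : List ℤ) (h : ℤ) (r : List ℤ),
    (∀ i : ℕ, 0 ≤ h + (a.take i).sum) → h + a.sum = 0 →
    cut h (a ++ -1 :: r) = some (a, r)
  | [], h, r, hp, hs => by
    have : h = 0 := by simpa using hs
    simp [cut, this]
  | x :: a', h, r, hp, hs => by
    have h1 : 0 ≤ h + x := by simpa using hp 1
    rw [List.cons_append, cut, if_neg (by omega)]
    have ih := cut_of a' (h + x) r (fun i => by have := hp (i + 1); simp at this; simpa [add_assoc] using this) (by simp at hs; omega)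
    rw [ih]
    rfl



lemma sum_take_append (u v : List ℤ) (i : ℕ) :
    ((u ++ v).take i).sum = (u.take i).sum + (v.take (i - u.length)).sum := by
  rw [List.take_append, List.sum_append]

lemma sum_take_comp_tail (a b c : List ℤ) (i : ℕ) :
    ((a ++ -1 :: (b ++ -1 :: c)).take (a.length + (1 + (b.length + (1 + i))))).sum
      = a.sum + (-1) + (b.sum + (-1 + (c.take i).sum)) := by
  rw [sum_take_append]
  have e1 : a.length + (1 + (b.length + (1 + i))) - a.length = 1 + (b.length + (1 + i)) := by omega
  rw [e1, List.take_of_length_le (by omega)]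
  have e2 : (1 : ℕ) + (b.length + (1 + i)) = (b.length + (1 + i)) + 1 := by omega
  rw [e2]
  simp only [List.take_succ_cons, List.sum_cons]
  rw [sum_take_append, List.take_of_length_le (by omega)]
  have e3 : b.length + (1 + i) - b.length = i + 1 := by omega
  rw [e3]
  simp only [List.take_succ_cons, List.sum_cons]
  ring

def comp3 (a b c : List ℤ) : List ℤ := 2 :: (a ++ -1 :: (b ++ -1 :: c))

lemma comp3_length (a b c : List ℤ) :
    (comp3 a b c).length = a.length + b.length + c.length + 3 := by
  simp [comp3]; omega

lemma exc_comp3 {a b c : List ℤ} (ha : Exc a) (hb : Exc b) (hc : Exc c) :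
    Exc (comp3 a b c) := by
  obtain ⟨ham, hap, has⟩ := ha
  obtain ⟨hbm, hbp, hbs⟩ := hb
  obtain ⟨hcm, hcp, hcs⟩ := hc
  have hL1 : ∀ k : ℕ, -1 ≤ ((-1 :: c).take k).sum := by
    intro k
    cases k with
    | zero => simp
    | succ j => have := hcp j; simp; omega
  have hL2 : ∀ j : ℕ, -1 ≤ ((b ++ -1 :: c).take j).sum := by
    intro j
    rw [sum_take_append]
    have := hbp j; have := hL1 (j - b.length); omega
  have hL3 : ∀ j : ℕ, -2 ≤ ((-1 :: (b ++ -1 :: c)).take j).sum := by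
    intro j
    cases j with
    | zero => simp
    | succ k => have := hL2 k; simp; omega
  refine ⟨?_, ?_, by simp [comp3, has, hbs, hcs]⟩
  · intro x hx
    simp only [comp3, List.mem_cons, List.mem_append] at hx
    rcases hx with rfl | h | h
    · simp
    · exact ham x h
    · rcases h with rfl | h
      · simp
      · rcases h with h | rfl | h
        · exact hbm x h
        · simp
        · exact hcm x h
  · intro i
    cases i with
    | zero => simp
    | succ j =>
      have h1 : ((comp3 a b c).take (j+1)).sum
          = 2 + ((a ++ -1 :: (b ++ -1 :: c)).take j).sum := by
        simp [comp3]
      rw [h1, sum_take_append]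
      have := hap j; have := hL3 (j - a.length); omega

lemma sum_take_eq_of_exc {l : List ℤ} (h : Exc l) : ∀ i, l.length ≤ i → (l.take i).sum = 0 := by
  intro i hi
  rw [List.take_of_length_le hi, h.2.2]

lemma comp3_inj {a b c a' b' c' : List ℤ} (ha : Exc a) (hb : Exc b) (ha' : Exc a') (hb' : Exc b')
    (h : comp3 a b c = comp3 a' b' c') : a = a' ∧ b = b' ∧ c = c' := by
  simp only [comp3, List.cons.injEq, true_and] at h
  have h1 : cut 0 (a ++ -1 :: (b ++ -1 :: c)) = some (a, b ++ -1 :: c) :=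
    cut_of a 0 _ (fun i => by simpa using ha.2.1 i) (by simpa using ha.2.2)
  have h1' : cut 0 (a' ++ -1 :: (b' ++ -1 :: c')) = some (a', b' ++ -1 :: c') :=
    cut_of a' 0 _ (fun i => by simpa using ha'.2.1 i) (by simpa using ha'.2.2)
  rw [h] at h1
  rw [h1'] at h1
  simp at h1
  obtain ⟨rfl, h1⟩ := h1
  have h2 : cut 0 (b ++ -1 :: c) = some (b, c) :=
    cut_of b 0 _ (fun i => by simpa using hb.2.1 i) (by simpa using hb.2.2)
  have h2' : cut 0 (b' ++ -1 :: c') = some (b', c') :=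
    cut_of b' 0 _ (fun i => by simpa using hb'.2.1 i) (by simpa using hb'.2.2)
  rw [← h1, h2'] at h2
  simp at h2
  exact ⟨rfl, h2.1.symm, h2.2.symm⟩

lemma decomp {r : List ℤ} (he : Exc (2 :: r)) :
    ∃ a b c, Exc a ∧ Exc b ∧ Exc c ∧ r = a ++ -1 :: (b ++ -1 :: c) := by
  obtain ⟨hm, hp, hs⟩ := he
  have hrm : ∀ x ∈ r, x ∈ ({-1, 0, 2} : Set ℤ) := fun x hx => hm x (by simp [hx])
  have hrs : r.sum = -2 := by simp at hs; omega
  have hrp : ∀ i : ℕ, -2 ≤ (r.take i).sum := by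
    intro i
    have := hp (i + 1); simp at this; omega
  -- first cut
  have h1 : (cut 0 r).isSome := cut_isSome r 0 le_rfl (by omega)
  obtain ⟨⟨a, r1⟩, hcut1⟩ := Option.isSome_iff_exists.1 h1
  obtain ⟨hre, hap, has⟩ := cut_spec r 0 a r1 hrm le_rfl hcut1
  have ham : ∀ x ∈ a, x ∈ ({-1, 0, 2} : Set ℤ) := fun x hx => hrm x (by simp [hre, hx])
  have hr1m : ∀ x ∈ r1, x ∈ ({-1, 0, 2} : Set ℤ) := fun x hx => hrm x (by simp [hre, hx])
  have hr1s : r1.sum = -1 := by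
    have : r.sum = a.sum + (-1) + r1.sum := by simp [hre]; ring
    omega
  have h2 : (cut 0 r1).isSome := cut_isSome r1 0 le_rfl (by omega)
  obtain ⟨⟨b, c⟩, hcut2⟩ := Option.isSome_iff_exists.1 h2
  obtain ⟨hr1e, hbp, hbs⟩ := cut_spec r1 0 b c hr1m le_rfl hcut2
  have hcm : ∀ x ∈ c, x ∈ ({-1, 0, 2} : Set ℤ) := fun x hx => hr1m x (by simp [hr1e, hx])
  have hbm : ∀ x ∈ b, x ∈ ({-1, 0, 2} : Set ℤ) := fun x hx => hr1m x (by simp [hr1e, hx])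
  have hcs : c.sum = 0 := by
    have : r1.sum = b.sum + (-1) + c.sum := by simp [hr1e]; ring
    omega
  have hcp : ∀ i : ℕ, 0 ≤ (c.take i).sum := by
    intro i
    have h4 := hrp (a.length + (1 + (b.length + (1 + i))))
    rw [hre, hr1e, sum_take_comp_tail] at h4
    omega
  refine ⟨a, b, c, ⟨ham, fun i => by simpa using hap i, by omega⟩,
    ⟨hbm, fun i => by simpa using hbp i, by omega⟩, ⟨hcm, hcp, hcs⟩, ?_⟩
  rw [hre, hr1e]



def allL : ℕ → Finset (List ℤ)
  | 0 => {[]}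
  | n + 1 => (({-1, 0, 2} : Finset ℤ) ×ˢ allL n).image fun p => p.1 :: p.2

lemma mem_allL : ∀ {n : ℕ} {l : List ℤ},
    l ∈ allL n ↔ l.length = n ∧ ∀ x ∈ l, x ∈ ({-1, 0, 2} : Set ℤ)
  | 0, l => by
    simp only [allL, Finset.mem_singleton]
    constructor
    · rintro rfl; simp
    · rintro ⟨h, -⟩; exact List.length_eq_zero_iff.1 h
  | n + 1, l => by
    simp only [allL, Finset.mem_image, Finset.mem_product]
    constructor
    · rintro ⟨⟨x, m⟩, ⟨hx, hm⟩, rfl⟩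
      obtain ⟨hlen, hmem⟩ := mem_allL.1 hm
      refine ⟨by simp [hlen], ?_⟩
      intro y hy
      rcases List.mem_cons.1 hy with rfl | hy
      · simpa using hx
      · exact hmem y hy
    · rintro ⟨hlen, hmem⟩
      cases l with
      | nil => simp at hlen
      | cons x m =>
        refine ⟨(x, m), ⟨?_, mem_allL.2 ⟨by simpa using hlen, fun y hy => hmem y (by simp [hy])⟩⟩, rfl⟩
        simpa using hmem x (by simp)

open scoped Classical in
noncomputable def eF (n : ℕ) : Finset (List ℤ) := (allL n).filter Exc

lemma mem_eF {n : ℕ} {l : List ℤ} : l ∈ eF n ↔ l.length = n ∧ Exc l := by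
  classical
  rw [eF, Finset.mem_filter, mem_allL]
  constructor
  · rintro ⟨⟨hlen, -⟩, he⟩
    exact ⟨hlen, he⟩
  · rintro ⟨hlen, he⟩
    exact ⟨⟨hlen, he.1⟩, he⟩



noncomputable def cnt (n : ℕ) : ℕ := (eF n).card

noncomputable def Tset (n : ℕ) : Finset (List ℤ) := (eF n).filter fun l => l.head? = some 2

lemma mem_Tset {n : ℕ} {l : List ℤ} :
    l ∈ Tset n ↔ l.length = n ∧ Exc l ∧ l.head? = some 2 := by
  rw [Tset, Finset.mem_filter, mem_eF]; tauto

lemma cnt_zero : cnt 0 = 1 := by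
  have : eF 0 = {[]} := by
    ext l
    rw [mem_eF, Finset.mem_singleton]
    constructor
    · rintro ⟨h, -⟩; exact List.length_eq_zero_iff.1 h
    · rintro rfl; exact ⟨rfl, exc_nil⟩
  rw [cnt, this, Finset.card_singleton]

lemma eF_succ (n : ℕ) : eF (n + 1) = (eF n).image (List.cons 0) ∪ Tset (n + 1) := by
  ext l
  rw [Finset.mem_union, Finset.mem_image, mem_eF, mem_Tset]
  constructor
  · rintro ⟨hlen, he⟩
    cases l with
    | nil => simp at hlen
    | cons x r =>
      rcases head_zero_or_two he with rfl | rfl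
      · exact Or.inl ⟨r, mem_eF.2 ⟨by simpa using hlen, exc_cons_zero.1 he⟩, rfl⟩
      · exact Or.inr ⟨hlen, he, rfl⟩
  · rintro (⟨r, hr, rfl⟩ | ⟨hlen, he, -⟩)
    · obtain ⟨hlen, he⟩ := mem_eF.1 hr
      exact ⟨by simpa using hlen, exc_cons_zero.2 he⟩
    · exact ⟨hlen, he⟩

lemma cnt_succ (n : ℕ) : cnt (n + 1) = cnt n + (Tset (n + 1)).card := by
  rw [cnt, eF_succ, Finset.card_union_of_disjoint, Finset.card_image_of_injective _ (List.cons_injective), cnt]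
  rw [Finset.disjoint_left]
  rintro l hl hl'
  obtain ⟨r, -, rfl⟩ := Finset.mem_image.1 hl
  have := (mem_Tset.1 hl').2.2
  simp at this

lemma Tset_small {n : ℕ} (hn : n < 3) : Tset n = ∅ := by
  rw [Finset.eq_empty_iff_forall_notMem]
  intro l hl
  obtain ⟨hlen, he, hh⟩ := mem_Tset.1 hl
  cases l with
  | nil => simp at hh
  | cons x r =>
    have hx : x = 2 := by simpa using hh
    subst hx
    obtain ⟨a, b, c, -, -, -, hr⟩ := decomp he
    have hlen2 : r.length = a.length + b.length + c.length + 2 := by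
      subst hr; simp; omega
    simp at hlen
    omega

noncomputable def F3 (i j k : ℕ) : Finset (List ℤ) :=
  ((eF i ×ˢ eF j ×ˢ eF k).image fun t => comp3 t.1 t.2.1 t.2.2)

lemma mem_F3 {i j k : ℕ} {l : List ℤ} :
    l ∈ F3 i j k ↔ ∃ a b c, Exc a ∧ Exc b ∧ Exc c ∧
      a.length = i ∧ b.length = j ∧ c.length = k ∧ l = comp3 a b c := by
  rw [F3, Finset.mem_image]
  constructor
  · rintro ⟨⟨a, b, c⟩, ht, rfl⟩
    simp only [Finset.mem_product] at ht
    obtain ⟨ha, hb, hc⟩ := ht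
    obtain ⟨hal, hae⟩ := mem_eF.1 ha
    obtain ⟨hbl, hbe⟩ := mem_eF.1 hb
    obtain ⟨hcl, hce⟩ := mem_eF.1 hc
    exact ⟨a, b, c, hae, hbe, hce, hal, hbl, hcl, rfl⟩
  · rintro ⟨a, b, c, hae, hbe, hce, hal, hbl, hcl, rfl⟩
    exact ⟨(a, b, c), by simp [Finset.mem_product, mem_eF, *], rfl⟩

lemma card_F3 (i j k : ℕ) : (F3 i j k).card = cnt i * cnt j * cnt k := by
  rw [F3, Finset.card_image_of_injOn, Finset.card_product, Finset.card_product]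
  · simp [cnt, mul_assoc]
  · rintro ⟨a, b, c⟩ ht ⟨a', b', c'⟩ ht' h
    simp only [Finset.mem_coe, Finset.mem_product] at ht ht'
    have := comp3_inj (mem_eF.1 ht.1).2 (mem_eF.1 ht.2.1).2 (mem_eF.1 ht'.1).2 (mem_eF.1 ht'.2.1).2 h
    simp only [Prod.mk.injEq]
    tauto

lemma F3_idx {i j k i' j' k' : ℕ} {l : List ℤ} (h : l ∈ F3 i j k) (h' : l ∈ F3 i' j' k') :
    i = i' ∧ j = j' ∧ k = k' := by
  obtain ⟨a, b, c, hae, hbe, hce, hal, hbl, hcl, rfl⟩ := mem_F3.1 h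
  obtain ⟨a', b', c', hae', hbe', hce', hal', hbl', hcl', hcomp⟩ := mem_F3.1 h'
  obtain ⟨rfl, rfl, rfl⟩ := comp3_inj hae' hbe' hae hbe hcomp.symm
  exact ⟨hal ▸ hal', hbl ▸ hbl', hcl ▸ hcl'⟩

lemma Tset_eq (n : ℕ) :
    Tset (n + 3) = (Finset.HasAntidiagonal.antidiagonal n).biUnion fun p =>
      (Finset.HasAntidiagonal.antidiagonal p.2).biUnion fun q => F3 p.1 q.1 q.2 := by
  ext l
  simp only [Finset.mem_biUnion, Finset.HasAntidiagonal.mem_antidiagonal, mem_Tset, Prod.exists]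
  constructor
  · rintro ⟨hlen, he, hh⟩
    cases l with
    | nil => simp at hh
    | cons x r =>
      have hx : x = 2 := by simpa using hh
      subst hx
      obtain ⟨a, b, c, hae, hbe, hce, hr⟩ := decomp he
      have hlc : (2 :: r).length = a.length + b.length + c.length + 3 := by
        subst hr; simp [comp3]; omega
      refine ⟨a.length, b.length + c.length, by omega, b.length, c.length, rfl, ?_⟩
      exact mem_F3.2 ⟨a, b, c, hae, hbe, hce, rfl, rfl, rfl, by rw [comp3, hr]⟩
  · rintro ⟨p1, p2, hp, q1, q2, hq, hl⟩
    obtain ⟨a, b, c, hae, hbe, hce, hal, hbl, hcl, rfl⟩ := mem_F3.1 hl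
    refine ⟨by rw [comp3_length]; omega, exc_comp3 hae hbe hce, rfl⟩

lemma Tset_card (n : ℕ) :
    (Tset (n + 3)).card = ∑ p ∈ Finset.HasAntidiagonal.antidiagonal n, ∑ q ∈ Finset.HasAntidiagonal.antidiagonal p.2,
      cnt p.1 * cnt q.1 * cnt q.2 := by
  rw [Tset_eq, Finset.card_biUnion]
  · refine Finset.sum_congr rfl fun p hp => ?_
    rw [Finset.card_biUnion]
    · exact Finset.sum_congr rfl fun q hq => card_F3 _ _ _
    · rintro q hq q' hq' hne
      rw [Function.onFun, Finset.disjoint_left]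
      intro l hl hl'
      obtain ⟨-, h2, h3⟩ := F3_idx hl hl'
      exact hne (Prod.ext h2 h3)
  · rintro p hp p' hp' hne
    rw [Function.onFun, Finset.disjoint_left]
    rintro l hl hl'
    obtain ⟨q, hq, hlq⟩ := Finset.mem_biUnion.1 hl
    obtain ⟨q', hq', hlq'⟩ := Finset.mem_biUnion.1 hl'
    obtain ⟨h1, h2, h3⟩ := F3_idx hlq hlq'
    simp only [Finset.HasAntidiagonal.mem_antidiagonal] at hp hp' hq hq'
    apply hne
    have : p.2 = p'.2 := by omega
    exact Prod.ext h1 this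


lemma gf_coeff (n : ℕ) : coeff n excursionGF = (cnt n : ℤ) := by
  rw [excursionGF, coeff_mk]
  congr 2
  rw [cnt, ← Nat.card_eq_finsetCard]
  exact Nat.card_congr (Equiv.subtypeEquivRight fun l => by rw [mem_eF, Exc])

lemma coeff_cube (n : ℕ) : coeff n (excursionGF ^ 3) =
    ((∑ p ∈ Finset.HasAntidiagonal.antidiagonal n, ∑ q ∈ Finset.HasAntidiagonal.antidiagonal p.2,
      cnt p.1 * cnt q.1 * cnt q.2 : ℕ) : ℤ) := by
  have h3 : excursionGF ^ 3 = excursionGF * (excursionGF * excursionGF) := by ring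
  rw [h3, coeff_mul]
  push_cast
  refine Finset.sum_congr rfl fun p hp => ?_
  rw [coeff_mul, Finset.mul_sum]
  refine Finset.sum_congr rfl fun q hq => ?_
  rw [gf_coeff, gf_coeff, gf_coeff]
  push_cast
  ring

lemma cnt_one : cnt 1 = 1 := by
  rw [cnt_succ, Tset_small (by norm_num), cnt_zero]; simp

lemma cnt_two : cnt 2 = 1 := by
  rw [cnt_succ, Tset_small (by norm_num), cnt_one]; simp


end ExcursionAux


open ExcursionAux in
theorem excursion_minimalPolynomial :
    1 + (X - 1) * excursionGF + X ^ 3 * excursionGF ^ 3 = 0 := by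
  ext k
  rw [map_zero, map_add, map_add, sub_mul, one_mul, map_sub, coeff_one]
  rcases k with _ | _ | _ | n
  · have h0 : coeff 0 (X * excursionGF) = 0 := by
      simp [coeff_mul]
    rw [coeff_X_pow_mul' (excursionGF ^ 3) 3 0]
    norm_num [h0, gf_coeff, cnt_zero]
  · rw [coeff_X_pow_mul' (excursionGF ^ 3) 3 1, if_neg (by norm_num),
      coeff_succ_X_mul, gf_coeff, gf_coeff, cnt_zero, cnt_one]
    simp
  · rw [coeff_X_pow_mul' (excursionGF ^ 3) 3 2, if_neg (by norm_num),
      coeff_succ_X_mul, gf_coeff, gf_coeff, cnt_one, cnt_two]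
    simp
  · have e1 : n + 1 + 1 + 1 = n + 3 := by omega
    rw [e1]
    rw [coeff_X_pow_mul' (excursionGF ^ 3) 3 (n + 3)]
    rw [if_neg (show ¬(n + 3 = 0) by omega), if_pos (show 3 ≤ n + 3 by omega),
      show n + 3 - 3 = n by omega, coeff_cube,
      show n + 3 = n + 2 + 1 from rfl, coeff_succ_X_mul, gf_coeff, gf_coeff,
      cnt_succ (n + 2), show n + 2 + 1 = n + 3 from rfl, Tset_card n]
    push_cast
    ring
end
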